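/- Let I, U : ℝ → ℝ be twice continuously differentiable on an open interval containing q*, with I(q) > 0 and I'(q) > 0 on this interval, and set 𝓔(H, q) = H²/(2 I(q)) + U(q). Suppose h is differentiable on a neighborhood of q* with h(q*) = H* > 0 and ∂𝓔/∂q(h(q), q) = 0 for all q in this neighborhood. If h'(q*) < 0 (a family of relative equilibria moving toward smaller q under increasing angular momentum, i.e. ending in a termination fission) then ∂²𝓔/∂q²(H*, q*) < 0, so the relative equilibrium is energetically unstable in the degree of freedom q; if h'(q*) > 0 (a family emanating from a transition fission) then ∂²𝓔/∂q²(H*, q*) > 0, so the relative equilibrium is energetically stable in the degree of freedom q. -/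

import Mathlib

/-- Corollary on fission bifurcations: with `𝓔(H,q) = H²/(2 I q) + U q`,
`I, I' > 0` on an open interval containing `q*`, and `q ↦ h q` parameterizing
the family of relative equilibria (`∂𝓔/∂q(h q, q) = 0` near `q*`,
`h q* = H* > 0`): if `h'(q*) < 0` (family ending in a termination fission) then
`∂²𝓔/∂q²(H*, q*) < 0` (energetically unstable in `q`); if `h'(q*) > 0`
(family emanating from a transition fission) then `∂²𝓔/∂q²(H*, q*) > 0`
(energetically stable in `q`). -/
theorem termination_fission_unstable_transition_fission_stable
    (I U h : ℝ → ℝ) (qstar Hstar a b : ℝ)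
    (hmem : qstar ∈ Set.Ioo a b)
    (hI : ContDiffOn ℝ 2 I (Set.Ioo a b)) (hU : ContDiffOn ℝ 2 U (Set.Ioo a b))
    (hIpos : ∀ q ∈ Set.Ioo a b, 0 < I q)
    (hI'pos : ∀ q ∈ Set.Ioo a b, 0 < deriv I q)
    (hHstar : 0 < Hstar) (hhq : h qstar = Hstar)
    (hhdiff : ∀ᶠ q in nhds qstar, DifferentiableAt ℝ h q)
    (hequil : ∀ᶠ q in nhds qstar,
      deriv (fun x => (h q) ^ 2 / (2 * I x) + U x) q = 0) :
    (deriv h qstar < 0 →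
        deriv (deriv (fun x => Hstar ^ 2 / (2 * I x) + U x)) qstar < 0) ∧
      (0 < deriv h qstar →
        0 < deriv (deriv (fun x => Hstar ^ 2 / (2 * I x) + U x)) qstar) := by
  have hsopen : IsOpen (Set.Ioo a b) := isOpen_Ioo
  have hsnhds : Set.Ioo a b ∈ nhds qstar := hsopen.mem_nhds hmem
  -- differentiability facts
  have hIdiff : ∀ x ∈ Set.Ioo a b, DifferentiableAt ℝ I x := fun x hx =>
    ((hI.differentiableOn (by norm_num)).differentiableAt (hsopen.mem_nhds hx))
  have hI'cd : ContDiffOn ℝ 1 (deriv I) (Set.Ioo a b) :=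
    hI.deriv_of_isOpen hsopen (by norm_num)
  have hI'diff : ∀ x ∈ Set.Ioo a b, DifferentiableAt ℝ (deriv I) x := fun x hx =>
    ((hI'cd.differentiableOn (by norm_num)).differentiableAt (hsopen.mem_nhds hx))
  have hUdiff : ∀ x ∈ Set.Ioo a b, DifferentiableAt ℝ U x := fun x hx =>
    ((hU.differentiableOn (by norm_num)).differentiableAt (hsopen.mem_nhds hx))
  have hU'cd : ContDiffOn ℝ 1 (deriv U) (Set.Ioo a b) :=
    hU.deriv_of_isOpen hsopen (by norm_num)
  have hU'diff : ∀ x ∈ Set.Ioo a b, DifferentiableAt ℝ (deriv U) x := fun x hx =>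
    ((hU'cd.differentiableOn (by norm_num)).differentiableAt (hsopen.mem_nhds hx))
  set ψ : ℝ → ℝ := fun x => -(deriv I x) / (2 * (I x) ^ 2) with hψdef
  -- the first derivative in x
  have key : ∀ (c : ℝ), ∀ x ∈ Set.Ioo a b,
      deriv (fun y => c / (2 * I y) + U y) x = c * ψ x + deriv U x := by
    intro c x hx
    have hIx : I x ≠ 0 := (hIpos x hx).ne'
    have hId := (hIdiff x hx).hasDerivAt
    have h2I : HasDerivAt (fun y => 2 * I y) (2 * deriv I x) x := hId.const_mul 2
    have h2Ix : (2 : ℝ) * I x ≠ 0 := by positivity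
    have hdiv : HasDerivAt (fun y => c / (2 * I y))
        ((0 * (2 * I x) - c * (2 * deriv I x)) / (2 * I x) ^ 2) x :=
      (hasDerivAt_const x c).div h2I h2Ix
    have hsum := hdiv.fun_add (hUdiff x hx).hasDerivAt
    rw [hsum.deriv]
    have : (0 * (2 * I x) - c * (2 * deriv I x)) / (2 * I x) ^ 2 = c * ψ x := by
      simp only [hψdef]
      field_simp
      ring
    rw [this]
  -- ψ and deriv U are differentiable at qstar
  have hIq : I qstar ≠ 0 := (hIpos qstar hmem).ne'
  have hψdiff : DifferentiableAt ℝ ψ qstar := by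
    apply DifferentiableAt.div
    · exact (hI'diff qstar hmem).neg
    · exact (differentiableAt_const 2).mul ((hIdiff qstar hmem).pow 2)
    · positivity
  have hU'dq : DifferentiableAt ℝ (deriv U) qstar := hU'diff qstar hmem
  have hhdq : DifferentiableAt ℝ h qstar := hhdiff.self_of_nhds
  -- the target second derivative
  have hφ : deriv (fun x => Hstar ^ 2 / (2 * I x) + U x) =ᶠ[nhds qstar]
      fun x => Hstar ^ 2 * ψ x + deriv U x := by
    filter_upwards [hsnhds] with x hx using key (Hstar ^ 2) x hx
  have hT : deriv (deriv (fun x => Hstar ^ 2 / (2 * I x) + U x)) qstar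
      = Hstar ^ 2 * deriv ψ qstar + deriv (deriv U) qstar := by
    rw [hφ.deriv_eq]
    have hTd := (hψdiff.hasDerivAt.const_mul (Hstar ^ 2)).fun_add hU'dq.hasDerivAt
    rw [hTd.deriv]
  -- the equilibrium family gives G ≡ 0 near qstar
  have hG0 : (fun q => (h q) ^ 2 * ψ q + deriv U q) =ᶠ[nhds qstar]
      fun _ => (0 : ℝ) := by
    filter_upwards [hequil, hsnhds] with q hq hqs
    rw [← key ((h q) ^ 2) q hqs, hq]
  have hGderiv : deriv (fun q => (h q) ^ 2 * ψ q + deriv U q) qstar = 0 := by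
    rw [hG0.deriv_eq, deriv_const]
  have hGcalc : deriv (fun q => (h q) ^ 2 * ψ q + deriv U q) qstar
      = (2 * h qstar * deriv h qstar) * ψ qstar
        + (h qstar) ^ 2 * deriv ψ qstar + deriv (deriv U) qstar := by
    have hsq : HasDerivAt (fun q => (h q) ^ 2) (2 * h qstar * deriv h qstar)
        qstar := by
      have := (hhdq.hasDerivAt.fun_pow 2)
      simpa [mul_comm, mul_assoc, mul_left_comm] using this
    have := ((hsq.fun_mul hψdiff.hasDerivAt).fun_add hU'dq.hasDerivAt)
    rw [this.deriv]
  -- combine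
  have hmain : deriv (deriv (fun x => Hstar ^ 2 / (2 * I x) + U x)) qstar
      = Hstar * deriv h qstar * deriv I qstar / (I qstar) ^ 2 := by
    have h0 := hGderiv
    rw [hGcalc, hhq] at h0
    rw [hT]
    have hψq : ψ qstar = -(deriv I qstar) / (2 * (I qstar) ^ 2) := rfl
    have : Hstar ^ 2 * deriv ψ qstar + deriv (deriv U) qstar
        = -(2 * Hstar * deriv h qstar) * ψ qstar := by linarith
    rw [this, hψq]
    field_simp
  rw [hmain]
  have hIpq := hIpos qstar hmem
  have hI'pq := hI'pos qstar hmem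
  constructor
  · intro hneg
    have : Hstar * deriv h qstar * deriv I qstar < 0 := by
      have := mul_pos hHstar hI'pq
      nlinarith
    exact div_neg_of_neg_of_pos this (by positivity)
  · intro hpos
    have : 0 < Hstar * deriv h qstar * deriv I qstar := by positivity
    positivity
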